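/- For each integer n ≥ 11 with n ≡ 5 (mod 6), there exists a K_3-divisible graph G of order n whose complement has exactly (3n − 7)/2 edges and which has no K_3-decomposition. -/

import Mathlib

/-- A graph is `K_k`-divisible if `k(k-1)/2` divides its number of edges and `k-1`
divides every vertex degree. -/
def KkDivisible {V : Type*} (k : ℕ) (G : SimpleGraph V) : Prop :=
  (k * (k - 1) / 2) ∣ G.edgeSet.ncard ∧ ∀ x : V, (k - 1) ∣ (G.neighborSet x).ncard

/-- A `K_k`-decomposition of `G`: a set of `k`-cliques of `G` (i.e. subgraphs
isomorphic to `K_k`) such that every edge of `G` lies in exactly one of them. -/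
def HasKkDecomposition {V : Type*} (k : ℕ) (G : SimpleGraph V) : Prop :=
  ∃ D : Set (Finset V),
    (∀ A ∈ D, A.card = k ∧ ∀ x ∈ A, ∀ y ∈ A, x ≠ y → G.Adj x y) ∧
    (∀ x y : V, G.Adj x y → ∃! A, A ∈ D ∧ x ∈ A ∧ y ∈ A)

open Finset SimpleGraph

def R (n : ℕ) (x y : Fin n) : Prop :=
  (x.val = 0 ∧ 5 ≤ y.val) ∨ (x.val = 1 ∧ (y.val = 5 ∨ y.val = 6)) ∨
  (x.val = 2 ∧ (y.val = 3 ∨ y.val = 4)) ∨ (x.val = 3 ∧ y.val = 4) ∨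
  (7 ≤ x.val ∧ x.val % 2 = 1 ∧ y.val = x.val + 1)

instance (n : ℕ) (x y : Fin n) : Decidable (R n x y) := by unfold R; infer_instance

lemma R_lt {n : ℕ} {x y : Fin n} (h : R n x y) : x.val < y.val := by
  unfold R at h; omega

def H (n : ℕ) : SimpleGraph (Fin n) where
  Adj x y := R n x y ∨ R n y x
  symm := ⟨fun _ _ h => h.symm⟩
  loopless := ⟨fun _ h => by rcases h with h | h <;> exact absurd (R_lt h) (lt_irrefl _)⟩

instance (n : ℕ) : DecidableRel (H n).Adj := fun x y => inferInstanceAs (Decidable (_ ∨ _))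
instance (n : ℕ) : DecidableRel ((H n)ᶜ).Adj := fun x y => inferInstanceAs (Decidable (_ ∧ _))

lemma H_adj {n : ℕ} {x y : Fin n} : (H n).Adj x y ↔ R n x y ∨ R n y x := Iff.rfl

lemma adj0 {n : ℕ} {x : Fin n} (hx : x.val = 0) (t : Fin n) :
    (H n).Adj x t ↔ 5 ≤ t.val := by
  rw [H_adj]; unfold R; omega

lemma deg0 {n : ℕ} (hn : 11 ≤ n) {x : Fin n} (hx : x.val = 0) : (H n).degree x = n - 5 := by
  have h1 : (H n).neighborFinset x = univ.filter (fun y : Fin n => 5 ≤ y.val) := by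
    ext y; simp [mem_neighborFinset, adj0 hx]
  have h2 : (univ.filter (fun y : Fin n => ¬ 5 ≤ y.val)) =
      ({⟨0, by omega⟩, ⟨1, by omega⟩, ⟨2, by omega⟩, ⟨3, by omega⟩, ⟨4, by omega⟩} :
        Finset (Fin n)) := by
    ext y; simp [Fin.ext_iff]; omega
  have h2c : (univ.filter (fun y : Fin n => ¬ 5 ≤ y.val)).card = 5 := by
    rw [h2]
    rw [card_insert_of_notMem (by simp [Fin.ext_iff]),
        card_insert_of_notMem (by simp [Fin.ext_iff]),
        card_insert_of_notMem (by simp [Fin.ext_iff]),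
        card_insert_of_notMem (by simp [Fin.ext_iff]), card_singleton]
  have h3 := Finset.card_filter_add_card_filter_not
      (s := (univ : Finset (Fin n))) (p := fun y : Fin n => 5 ≤ y.val)
  simp only [card_univ, Fintype.card_fin] at h3
  have : (H n).degree x = (univ.filter (fun y : Fin n => 5 ≤ y.val)).card := by
    rw [← h1]; rfl
  omega

lemma degree_two_of {n : ℕ} (x : Fin n) (a b : ℕ) (ha : a < n) (hb : b < n) (hab : a ≠ b)
    (h : ∀ y : Fin n, (H n).Adj x y ↔ (y.val = a ∨ y.val = b)) : (H n).degree x = 2 := by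
  have h1 : (H n).neighborFinset x = ({⟨a, ha⟩, ⟨b, hb⟩} : Finset (Fin n)) := by
    ext y; simp [mem_neighborFinset, h, Fin.ext_iff]
  rw [← card_neighborFinset_eq_degree, h1, card_pair (by simp [Fin.ext_iff]; omega)]

lemma deg_ne0 {n : ℕ} (hn : 11 ≤ n) (hodd : n % 2 = 1) {x : Fin n} (hx : x.val ≠ 0) :
    (H n).degree x = 2 := by
  have hxn := x.isLt
  have hcase : x.val = 1 ∨ x.val = 2 ∨ x.val = 3 ∨ x.val = 4 ∨ x.val = 5 ∨ x.val = 6 ∨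
      (7 ≤ x.val ∧ x.val % 2 = 1) ∨ (8 ≤ x.val ∧ x.val % 2 = 0) := by omega
  rcases hcase with h | h | h | h | h | h | ⟨h, ho⟩ | ⟨h, ho⟩
  · exact degree_two_of x 5 6 (by omega) (by omega) (by omega)
      (fun y => by rw [H_adj]; unfold R; omega)
  · exact degree_two_of x 3 4 (by omega) (by omega) (by omega)
      (fun y => by rw [H_adj]; unfold R; omega)
  · exact degree_two_of x 2 4 (by omega) (by omega) (by omega)
      (fun y => by rw [H_adj]; unfold R; omega)
  · exact degree_two_of x 2 3 (by omega) (by omega) (by omega)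
      (fun y => by rw [H_adj]; unfold R; omega)
  · exact degree_two_of x 0 1 (by omega) (by omega) (by omega)
      (fun y => by rw [H_adj]; unfold R; omega)
  · exact degree_two_of x 0 1 (by omega) (by omega) (by omega)
      (fun y => by rw [H_adj]; unfold R; omega)
  · exact degree_two_of x 0 (x.val + 1) (by omega) (by omega) (by omega)
      (fun y => by rw [H_adj]; unfold R; omega)
  · exact degree_two_of x 0 (x.val - 1) (by omega) (by omega) (by omega)
      (fun y => by rw [H_adj]; unfold R; omega)

lemma sum_deg {n : ℕ} (hn : 11 ≤ n) (hodd : n % 2 = 1) :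
    ∑ x : Fin n, (H n).degree x = (n - 5) + 2 * (n - 1) := by
  have h0 : (⟨0, by omega⟩ : Fin n) ∈ (univ : Finset (Fin n)) := mem_univ _
  rw [← Finset.add_sum_erase _ _ h0, deg0 hn rfl]
  have h1 : ∑ x ∈ (univ : Finset (Fin n)).erase ⟨0, by omega⟩, (H n).degree x =
      ∑ _x ∈ (univ : Finset (Fin n)).erase ⟨0, by omega⟩, 2 := by
    refine Finset.sum_congr rfl (fun x hx => ?_)
    refine deg_ne0 hn hodd ?_
    have := Finset.mem_erase.mp hx
    simpa [Fin.ext_iff] using this.1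
  rw [h1, Finset.sum_const, Finset.card_erase_of_mem h0, card_univ, Fintype.card_fin]
  ring

lemma twice_edges {n : ℕ} (hn : 11 ≤ n) (hodd : n % 2 = 1) :
    2 * (H n).edgeFinset.card = 3 * n - 7 := by
  rw [← SimpleGraph.sum_degrees_eq_twice_card_edges, sum_deg hn hodd]; omega

lemma degG {n : ℕ} (hn : 11 ≤ n) (hodd : n % 2 = 1) (x : Fin n) :
    ((H n)ᶜ).degree x = if x.val = 0 then 4 else n - 3 := by
  rw [SimpleGraph.degree_compl, Fintype.card_fin]
  by_cases hx : x.val = 0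
  · rw [deg0 hn hx]; simp [hx]; omega
  · rw [deg_ne0 hn hodd hx]; simp [hx]; omega

lemma sum_degG {n : ℕ} (hn : 11 ≤ n) (hodd : n % 2 = 1) :
    ∑ x : Fin n, ((H n)ᶜ).degree x = 4 + (n - 1) * (n - 3) := by
  have h0 : (⟨0, by omega⟩ : Fin n) ∈ (univ : Finset (Fin n)) := mem_univ _
  rw [← Finset.add_sum_erase _ _ h0, degG hn hodd]
  have h1 : ∑ x ∈ (univ : Finset (Fin n)).erase ⟨0, by omega⟩, ((H n)ᶜ).degree x =
      ∑ _x ∈ (univ : Finset (Fin n)).erase ⟨0, by omega⟩, (n - 3) := by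
    refine Finset.sum_congr rfl (fun x hx => ?_)
    rw [degG hn hodd]
    have := Finset.mem_erase.mp hx
    have : x.val ≠ 0 := by simpa [Fin.ext_iff] using this.1
    simp [this]
  rw [h1, Finset.sum_const, Finset.card_erase_of_mem h0, card_univ, Fintype.card_fin]
  simp [Nat.smul_one_eq_cast]

lemma twice_edgesG {n : ℕ} (hn : 11 ≤ n) (hodd : n % 2 = 1) :
    2 * ((H n)ᶜ).edgeFinset.card = 4 + (n - 1) * (n - 3) := by
  rw [← SimpleGraph.sum_degrees_eq_twice_card_edges, sum_degG hn hodd]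

lemma ncard_edge {n : ℕ} (G : SimpleGraph (Fin n)) [DecidableRel G.Adj] :
    G.edgeSet.ncard = G.edgeFinset.card := by
  rw [← SimpleGraph.coe_edgeFinset, Set.ncard_coe_finset]

lemma ncard_nbhd {n : ℕ} (G : SimpleGraph (Fin n)) [DecidableRel G.Adj] (x : Fin n) :
    (G.neighborSet x).ncard = G.degree x := by
  rw [Set.ncard_eq_toFinset_card']; rfl

lemma fin_val_ne {n : ℕ} {x y : Fin n} {a b : ℕ} (hx : x.val = a) (hy : y.val = b)
    (hab : a ≠ b) : x ≠ y := fun h => hab (by rw [← hx, ← hy, h])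

lemma nadj_lem {n : ℕ} (p q : Fin n) (hp : p.val = 0) (hq : q.val < 5) :
    ¬ (H n).Adj p q := by
  intro h; rw [H_adj] at h; unfold R at h; omega

lemma t_is_one2 {n : ℕ} {v0 v2 t : Fin n} (e0 : v0.val = 0) (e2 : v2.val = 2)
    (c1 : ¬ (H n).Adj v0 t) (c2 : ¬ (H n).Adj v2 t) (ht0 : t ≠ v0) (ht2 : t ≠ v2) :
    t.val = 1 := by
  rw [H_adj] at c1 c2; unfold R at c1 c2
  rw [ne_eq, Fin.ext_iff] at ht0 ht2
  have f1 : t.val < 5 := by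
    by_contra h5
    exact c1 (Or.inl (Or.inl ⟨e0, by omega⟩))
  have f3 : t.val ≠ 3 := fun h3 =>
    c2 (Or.inl (Or.inr (Or.inr (Or.inl ⟨e2, Or.inl h3⟩))))
  have f4 : t.val ≠ 4 := fun h4 =>
    c2 (Or.inl (Or.inr (Or.inr (Or.inl ⟨e2, Or.inr h4⟩))))
  clear c1 c2
  omega

lemma t_is_one3 {n : ℕ} {v0 v3 t : Fin n} (e0 : v0.val = 0) (e3 : v3.val = 3)
    (c1 : ¬ (H n).Adj v0 t) (c2 : ¬ (H n).Adj v3 t) (ht0 : t ≠ v0) (ht3 : t ≠ v3) :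
    t.val = 1 := by
  rw [H_adj] at c1 c2; unfold R at c1 c2
  rw [ne_eq, Fin.ext_iff] at ht0 ht3
  have f1 : t.val < 5 := by
    by_contra h5
    exact c1 (Or.inl (Or.inl ⟨e0, by omega⟩))
  have f4 : t.val ≠ 4 := fun h4 =>
    c2 (Or.inl (Or.inr (Or.inr (Or.inr (Or.inl ⟨e3, h4⟩)))))
  have f2 : t.val ≠ 2 := fun h2 =>
    c2 (Or.inr (Or.inr (Or.inr (Or.inl ⟨h2, Or.inl e3⟩))))
  clear c1 c2
  omega


set_option maxHeartbeats 1000000 in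
/-- For each `n ≥ 11` with `n ≡ 5 (mod 6)` there is a `K_3`-divisible graph of order
`n` whose complement has exactly `(3n-7)/2` edges and which has no `K_3`-decomposition. -/
theorem nondecomposable_K3_five_mod_six (n : ℕ) (hn : 11 ≤ n) (hmod : n % 6 = 5) :
    ∃ G : SimpleGraph (Fin n), KkDivisible 3 G ∧
      ((Gᶜ.edgeSet.ncard : ℚ) = (3 * (n : ℚ) - 7) / 2) ∧ ¬ HasKkDecomposition 3 G := by
  have hodd : n % 2 = 1 := by omega
  refine ⟨(H n)ᶜ, ⟨?_, ?_⟩, ?_, ?_⟩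
  · -- 3 ∣ number of edges
    rw [ncard_edge]
    have h2E := twice_edgesG hn hodd
    have hm : n = 6 * (n / 6) + 5 := by omega
    set m := n / 6 with hmdef
    have hprod : (n - 1) * (n - 3) = 36 * (m * m) + 36 * m + 8 := by
      have e1 : n - 1 = 6 * m + 4 := by omega
      have e2 : n - 3 = 6 * m + 2 := by omega
      rw [e1, e2]; ring
    rw [hprod] at h2E
    generalize m * m = K at h2E
    show 3 * (3 - 1) / 2 ∣ _
    omega
  · -- 2 ∣ degrees
    intro x
    rw [ncard_nbhd, degG hn hodd]
    by_cases hx : x.val = 0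
    · simp [hx]
    · simp only [hx, if_false]; omega
  · -- edge count of complement
    rw [compl_compl, ncard_edge]
    have h2E := twice_edges hn hodd
    have hc : 2 * ((H n).edgeFinset.card : ℚ) + 7 = 3 * (n : ℚ) := by
      exact_mod_cast congrArg (Nat.cast (R := ℚ)) (by omega : 2 * (H n).edgeFinset.card + 7 = 3 * n)
    rw [eq_div_iff (by norm_num : (2:ℚ) ≠ 0)]
    linarith
  · -- no decomposition
    rintro ⟨D, hD1, hD2⟩
    obtain ⟨v0, e0⟩ : ∃ v : Fin n, v.val = 0 := ⟨⟨0, by omega⟩, rfl⟩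
    obtain ⟨v1, e1⟩ : ∃ v : Fin n, v.val = 1 := ⟨⟨1, by omega⟩, rfl⟩
    obtain ⟨v2, e2⟩ : ∃ v : Fin n, v.val = 2 := ⟨⟨2, by omega⟩, rfl⟩
    obtain ⟨v3, e3⟩ : ∃ v : Fin n, v.val = 3 := ⟨⟨3, by omega⟩, rfl⟩
    have adj01 : ((H n)ᶜ).Adj v0 v1 :=
      (SimpleGraph.compl_adj _ _ _).mpr
        ⟨fin_val_ne e0 e1 (by decide), nadj_lem v0 v1 e0 (by omega)⟩
    have adj02 : ((H n)ᶜ).Adj v0 v2 :=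
      (SimpleGraph.compl_adj _ _ _).mpr
        ⟨fin_val_ne e0 e2 (by decide), nadj_lem v0 v2 e0 (by omega)⟩
    have adj03 : ((H n)ᶜ).Adj v0 v3 :=
      (SimpleGraph.compl_adj _ _ _).mpr
        ⟨fin_val_ne e0 e3 (by decide), nadj_lem v0 v3 e0 (by omega)⟩
    have third : ∀ A ∈ D, ∀ p q : Fin n, p ∈ A → q ∈ A → p ≠ q →
        ∃ t, t ∈ A ∧ t ≠ p ∧ t ≠ q ∧ ((H n)ᶜ).Adj p t ∧ ((H n)ᶜ).Adj q t ∧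
          ∀ s ∈ A, s = p ∨ s = q ∨ s = t := by
      intro A hA p q hp hq hpq
      obtain ⟨hcard, hclique⟩ := hD1 A hA
      have hq' : q ∈ A.erase p := Finset.mem_erase.mpr ⟨hpq.symm, hq⟩
      have hc2 : ((A.erase p).erase q).card = 1 := by
        rw [Finset.card_erase_of_mem hq', Finset.card_erase_of_mem hp, hcard]
      obtain ⟨t, ht⟩ := Finset.card_eq_one.mp hc2
      have htm : t ∈ (A.erase p).erase q := by rw [ht]; exact Finset.mem_singleton_self t
      have ht1 : t ≠ q := (Finset.mem_erase.mp htm).1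
      have ht2 : t ≠ p := (Finset.mem_erase.mp (Finset.mem_erase.mp htm).2).1
      have htA : t ∈ A := Finset.mem_of_mem_erase (Finset.mem_of_mem_erase htm)
      refine ⟨t, htA, ht2, ht1, hclique p hp t htA (Ne.symm ht2),
        hclique q hq t htA (Ne.symm ht1), ?_⟩
      intro s hs
      by_contra hcon
      push_neg at hcon
      obtain ⟨hsp, hsq, hst⟩ := hcon
      have : s ∈ (A.erase p).erase q :=
        Finset.mem_erase.mpr ⟨hsq, Finset.mem_erase.mpr ⟨hsp, hs⟩⟩
      rw [ht, Finset.mem_singleton] at this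
      exact hst this
    obtain ⟨A, ⟨hAD, hA0, hA2⟩, -⟩ := hD2 v0 v2 adj02
    obtain ⟨t, htA, ht0, ht2, h0t, h2t, -⟩ :=
      third A hAD v0 v2 hA0 hA2 (fin_val_ne e0 e2 (by decide))
    obtain ⟨A', ⟨hA'D, hA'0, hA'3⟩, -⟩ := hD2 v0 v3 adj03
    obtain ⟨t', ht'A, ht'0, ht'3, h0t', h3t', hA'mem⟩ :=
      third A' hA'D v0 v3 hA'0 hA'3 (fin_val_ne e0 e3 (by decide))
    have ht1v : t = v1 :=
      Fin.ext ((t_is_one2 e0 e2 ((SimpleGraph.compl_adj _ _ _).mp h0t).2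
        ((SimpleGraph.compl_adj _ _ _).mp h2t).2 ht0 ht2).trans e1.symm)
    have ht1v' : t' = v1 :=
      Fin.ext ((t_is_one3 e0 e3 ((SimpleGraph.compl_adj _ _ _).mp h0t').2
        ((SimpleGraph.compl_adj _ _ _).mp h3t').2 ht'0 ht'3).trans e1.symm)
    obtain ⟨B, -, hBu⟩ := hD2 v0 v1 adj01
    have hAB : A = B := hBu A ⟨hAD, hA0, ht1v ▸ htA⟩
    have hA'B : A' = B := hBu A' ⟨hA'D, hA'0, ht1v' ▸ ht'A⟩
    have hv2A' : v2 ∈ A' := by rw [hA'B, ← hAB]; exact hA2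
    rcases hA'mem v2 hv2A' with h | h | h
    · exact fin_val_ne e2 e0 (by decide) h
    · exact fin_val_ne e2 e3 (by decide) h
    · exact fin_val_ne e2 e1 (by decide) (h.trans ht1v')
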